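/- arXiv:2401.00657 — 9 statements merged into one kernel-verified Lean document; each statement's English description precedes it below -/
import Mathlib

section
/- There exists a vector c ∈ ℝⁿ, independent of k, such that for all k ≥ 1 the ADMM iterates satisfy the fixed-point recurrence u^{k+1} = (I+Q)·u^k + c, where Q = θ(P+θI)⁻¹((R+θI)⁻¹(θI−P) − I). -/
open Matrix

lemma aux_posDef_add_smul_one {n : ℕ} {S : Matrix (Fin n) (Fin n) ℝ}
    (hS : S.PosSemidef) {θ : ℝ} (hθ : 0 < θ) :
    (S + θ • (1 : Matrix (Fin n) (Fin n) ℝ)).PosDef := by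
  rw [posDef_iff_dotProduct_mulVec]
  constructor
  · exact hS.1.add (by simp [Matrix.IsHermitian, Matrix.conjTranspose_smul])
  · intro x hx
    have h1 : star x ⬝ᵥ ((S + θ • (1 : Matrix (Fin n) (Fin n) ℝ)) *ᵥ x)
        = star x ⬝ᵥ (S *ᵥ x) + θ * (star x ⬝ᵥ x) := by
      simp [Matrix.add_mulVec, Matrix.smul_mulVec, Matrix.one_mulVec,
        dotProduct_add, dotProduct_smul, smul_eq_mul]
    rw [h1]
    have h2 := hS.dotProduct_mulVec_nonneg x
    have h3 : 0 < star x ⬝ᵥ x := dotProduct_star_self_pos_iff.mpr hx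
    nlinarith

/-- There exists a vector c ∈ ℝⁿ, independent of k, such that for all k ≥ 1 the ADMM
iterates satisfy the fixed-point recurrence u^{k+1} = (I+Q)·u^k + c, where
Q = θ(P+θI)⁻¹((R+θI)⁻¹(θI−P) − I). -/
theorem admm_fixed_point_iteration {m n : ℕ} (θ μ : ℝ) (hθ : 0 < θ) (hμ : 0 < μ)
    (A : Matrix (Fin m) (Fin n) ℝ) (L : Matrix (Fin n) (Fin n) ℝ) (f : Fin m → ℝ)
    (P R Q : Matrix (Fin n) (Fin n) ℝ)
    (hP : P = μ • (Aᵀ * A)) (hR : R = Lᵀ * L)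
    (hQ : Q = θ • ((P + θ • (1 : Matrix (Fin n) (Fin n) ℝ))⁻¹ *
      ((R + θ • (1 : Matrix (Fin n) (Fin n) ℝ))⁻¹ *
        (θ • (1 : Matrix (Fin n) (Fin n) ℝ) - P) - 1)))
    (w u b : ℕ → (Fin n → ℝ))
    (hw : ∀ k, w (k + 1) =
      (R + θ • (1 : Matrix (Fin n) (Fin n) ℝ))⁻¹.mulVec (θ • u k + θ • b k))
    (hu : ∀ k, u (k + 1) =
      (P + θ • (1 : Matrix (Fin n) (Fin n) ℝ))⁻¹.mulVec
        (θ • w (k + 1) - θ • b k + μ • Aᵀ.mulVec f))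
    (hb : ∀ k, b (k + 1) = b k + u (k + 1) - w (k + 1)) :
    ∃ c : Fin n → ℝ, ∀ k, 1 ≤ k →
      u (k + 1) = ((1 : Matrix (Fin n) (Fin n) ℝ) + Q).mulVec (u k) + c := by
  have hAtA : (Aᵀ * A).PosSemidef := by
    have h := posSemidef_conjTranspose_mul_self A
    rwa [conjTranspose_eq_transpose_of_trivial] at h
  have hLtL : (Lᵀ * L).PosSemidef := by
    have h := posSemidef_conjTranspose_mul_self L
    rwa [conjTranspose_eq_transpose_of_trivial] at h
  have hPpsd : P.PosSemidef := by
    subst hP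
    refine posSemidef_iff_dotProduct_mulVec.mpr ⟨?_, fun x => ?_⟩
    · rw [Matrix.IsHermitian, conjTranspose_smul, star_trivial, hAtA.1]
    · rw [smul_mulVec, dotProduct_smul, smul_eq_mul]
      exact mul_nonneg hμ.le (hAtA.dotProduct_mulVec_nonneg x)
  have hRpsd : R.PosSemidef := hR ▸ hLtL
  have hPd := aux_posDef_add_smul_one hPpsd hθ
  have hRd := aux_posDef_add_smul_one hRpsd hθ
  have hPu : IsUnit (P + θ • (1 : Matrix (Fin n) (Fin n) ℝ)).det := hPd.det_pos.ne'.isUnit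
  have hRu : IsUnit (R + θ • (1 : Matrix (Fin n) (Fin n) ℝ)).det := hRd.det_pos.ne'.isUnit
  have hPinv : (P + θ • (1 : Matrix (Fin n) (Fin n) ℝ)) *
      (P + θ • (1 : Matrix (Fin n) (Fin n) ℝ))⁻¹ = 1 := mul_nonsing_inv _ hPu
  have hPinv' : (P + θ • (1 : Matrix (Fin n) (Fin n) ℝ))⁻¹ *
      (P + θ • (1 : Matrix (Fin n) (Fin n) ℝ)) = 1 := nonsing_inv_mul _ hPu
  -- key fact: θ • b (k+1) = μ • Aᵀf - P.mulVec (u (k+1))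
  have hbk : ∀ k, θ • b (k + 1) = μ • Aᵀ.mulVec f - P.mulVec (u (k + 1)) := by
    intro k
    have h1 : (P + θ • (1 : Matrix (Fin n) (Fin n) ℝ)).mulVec (u (k + 1))
        = θ • w (k + 1) - θ • b k + μ • Aᵀ.mulVec f := by
      rw [hu k, Matrix.mulVec_mulVec, hPinv, Matrix.one_mulVec]
    have h3 : (P + θ • (1 : Matrix (Fin n) (Fin n) ℝ)).mulVec (u (k + 1))
        = P.mulVec (u (k + 1)) + θ • u (k + 1) := by
      simp [Matrix.add_mulVec, Matrix.smul_mulVec, Matrix.one_mulVec]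
    have h4 : θ • w (k + 1)
        = (P.mulVec (u (k + 1)) + θ • u (k + 1)) + θ • b k - μ • Aᵀ.mulVec f := by
      rw [← h3, h1]; abel
    have h2 : θ • b (k + 1) = θ • b k + θ • u (k + 1) - θ • w (k + 1) := by
      rw [hb k, smul_sub, smul_add]
    rw [h2, h4]; abel
  refine ⟨θ • (P + θ • (1 : Matrix (Fin n) (Fin n) ℝ))⁻¹.mulVec
      ((R + θ • (1 : Matrix (Fin n) (Fin n) ℝ))⁻¹.mulVec (μ • Aᵀ.mulVec f)), ?_⟩
  intro k hk
  obtain ⟨j, rfl⟩ : ∃ j, k = j + 1 := ⟨k - 1, (Nat.succ_pred_eq_of_pos hk).symm⟩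
  have hmat : (1 : Matrix (Fin n) (Fin n) ℝ) + Q
      = (P + θ • (1 : Matrix (Fin n) (Fin n) ℝ))⁻¹ *
        ((P + θ • (1 : Matrix (Fin n) (Fin n) ℝ)) +
          θ • ((R + θ • (1 : Matrix (Fin n) (Fin n) ℝ))⁻¹ *
            (θ • (1 : Matrix (Fin n) (Fin n) ℝ) - P) - 1)) := by
    rw [hQ, Matrix.mul_add, hPinv', Matrix.mul_smul]
  have key : θ • w (j + 1 + 1) - θ • b (j + 1) + μ • Aᵀ.mulVec f
      = ((P + θ • (1 : Matrix (Fin n) (Fin n) ℝ)) +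
          θ • ((R + θ • (1 : Matrix (Fin n) (Fin n) ℝ))⁻¹ *
            (θ • (1 : Matrix (Fin n) (Fin n) ℝ) - P) - 1)).mulVec (u (j + 1))
        + θ • (R + θ • (1 : Matrix (Fin n) (Fin n) ℝ))⁻¹.mulVec (μ • Aᵀ.mulVec f) := by
    rw [hw (j + 1), hbk j]
    simp only [Matrix.add_mulVec, Matrix.sub_mulVec, Matrix.smul_mulVec,
      Matrix.one_mulVec, Matrix.mulVec_add, Matrix.mulVec_sub, Matrix.mulVec_smul,
      ← Matrix.mulVec_mulVec, smul_add, smul_sub]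
    abel
  rw [hu (j + 1), key, hmat, ← Matrix.mulVec_mulVec]
  simp only [Matrix.mulVec_add, Matrix.mulVec_smul]
end

section
/- For all k ≥ 0 the over-relaxed ADMM iterates satisfy θ·b^{k+1} = μ·Aᵀf − μ·AᵀA·u^{k+1}, and there exists a vector c ∈ ℝⁿ, independent of k, such that for all k ≥ 1, u^{k+1} = (I+αQ)·u^k + c, where Q = θ(P+θI)⁻¹((R+θI)⁻¹(θI−P) − I). -/
open Matrix

lemma admm_aux_smul_posSemidef {n : ℕ} {M : Matrix (Fin n) (Fin n) ℝ}
    (hM : M.PosSemidef) {μ : ℝ} (hμ : 0 ≤ μ) : (μ • M).PosSemidef := by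
  rw [posSemidef_iff_dotProduct_mulVec]
  constructor
  · have h := hM.1
    unfold Matrix.IsHermitian at h ⊢
    rw [conjTranspose_smul, h]
    simp
  · intro x
    have h0 := (posSemidef_iff_dotProduct_mulVec.mp hM).2 x
    simp only [smul_mulVec, dotProduct_smul, smul_eq_mul]
    exact mul_nonneg hμ h0

lemma admm_aux_posDef {n : ℕ} {M : Matrix (Fin n) (Fin n) ℝ}
    (hM : M.PosSemidef) {θ : ℝ} (hθ : 0 < θ) :
    (M + θ • (1 : Matrix (Fin n) (Fin n) ℝ)).PosDef := by
  rw [posDef_iff_dotProduct_mulVec]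
  constructor
  · have h := hM.1
    unfold Matrix.IsHermitian at h ⊢
    rw [conjTranspose_add, conjTranspose_smul, conjTranspose_one, h]
    simp
  · intro x hx
    have h0 := (posSemidef_iff_dotProduct_mulVec.mp hM).2 x
    have h1 : 0 < dotProduct x x := by
      rcases lt_or_eq_of_le (Finset.sum_nonneg fun i _ => mul_self_nonneg (x i)) with h | h
      · exact h
      · exact absurd (dotProduct_self_eq_zero.mp h.symm) hx
    have hsx : star x = x := by simp
    simp only [add_mulVec, smul_mulVec, one_mulVec, dotProduct_add, dotProduct_smul,
      smul_eq_mul, hsx] at h0 ⊢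
    have : 0 < θ * dotProduct x x := mul_pos hθ h1
    linarith

/-- For all k ≥ 0 the over-relaxed ADMM iterates satisfy
θ·b^{k+1} = μ·Aᵀf − μ·AᵀA·u^{k+1}, and there exists a vector c ∈ ℝⁿ, independent of k,
such that for all k ≥ 1, u^{k+1} = (I+αQ)·u^k + c, where
Q = θ(P+θI)⁻¹((R+θI)⁻¹(θI−P) − I). -/
theorem overrelaxed_admm_fixed_point_iteration {m n : ℕ} (θ μ α : ℝ)
    (hθ : 0 < θ) (hμ : 0 < μ) (hα : 0 < α)
    (A : Matrix (Fin m) (Fin n) ℝ) (L : Matrix (Fin n) (Fin n) ℝ) (f : Fin m → ℝ)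
    (P R Q : Matrix (Fin n) (Fin n) ℝ)
    (hP : P = μ • (Aᵀ * A)) (hR : R = Lᵀ * L)
    (hQ : Q = θ • ((P + θ • (1 : Matrix (Fin n) (Fin n) ℝ))⁻¹ *
      ((R + θ • (1 : Matrix (Fin n) (Fin n) ℝ))⁻¹ *
        (θ • (1 : Matrix (Fin n) (Fin n) ℝ) - P) - 1)))
    (w u b : ℕ → (Fin n → ℝ))
    (hw : ∀ k, w (k + 1) =
      (R + θ • (1 : Matrix (Fin n) (Fin n) ℝ))⁻¹.mulVec (θ • u k + θ • b k))
    (hu : ∀ k, u (k + 1) =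
      (P + θ • (1 : Matrix (Fin n) (Fin n) ℝ))⁻¹.mulVec
        (θ • (α • w (k + 1) + (1 - α) • u k) - θ • b k + μ • Aᵀ.mulVec f))
    (hb : ∀ k, b (k + 1) = b k + u (k + 1) - α • w (k + 1) - (1 - α) • u k) :
    (∀ k, θ • b (k + 1) = μ • Aᵀ.mulVec f - μ • (Aᵀ * A).mulVec (u (k + 1))) ∧
    ∃ c : Fin n → ℝ, ∀ k, 1 ≤ k →
      u (k + 1) = ((1 : Matrix (Fin n) (Fin n) ℝ) + α • Q).mulVec (u k) + c := by
  have hAA : (Aᵀ * A).PosSemidef := by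
    have := posSemidef_conjTranspose_mul_self A
    rwa [conjTranspose_eq_transpose_of_trivial] at this
  have hPsd : P.PosSemidef := hP ▸ admm_aux_smul_posSemidef hAA hμ.le
  have hPθ : (P + θ • (1 : Matrix (Fin n) (Fin n) ℝ)).PosDef := admm_aux_posDef hPsd hθ
  have hPθdet : IsUnit (P + θ • (1 : Matrix (Fin n) (Fin n) ℝ)).det :=
    hPθ.det_pos.ne'.isUnit
  have key : ∀ k, (P + θ • (1 : Matrix (Fin n) (Fin n) ℝ)).mulVec (u (k + 1)) =
      θ • (α • w (k + 1) + (1 - α) • u k) - θ • b k + μ • Aᵀ.mulVec f := by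
    intro k
    rw [hu k, mulVec_mulVec, Matrix.mul_nonsing_inv _ hPθdet, one_mulVec]
  have part1 : ∀ k, θ • b (k + 1) = μ • Aᵀ.mulVec f - μ • (Aᵀ * A).mulVec (u (k + 1)) := by
    intro k
    have h := key k
    rw [add_mulVec, smul_mulVec, one_mulVec, hP, smul_mulVec] at h
    rw [hb k]
    linear_combination (norm := module) h
  refine ⟨part1, ?_⟩
  set T : Matrix (Fin n) (Fin n) ℝ := (P + θ • (1 : Matrix (Fin n) (Fin n) ℝ))⁻¹ with hT
  set S : Matrix (Fin n) (Fin n) ℝ := (R + θ • (1 : Matrix (Fin n) (Fin n) ℝ))⁻¹ with hS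
  refine ⟨(α * (θ * μ)) • (T * (S * Aᵀ)).mulVec f, ?_⟩
  intro k hk
  obtain ⟨j, rfl⟩ : ∃ j, k = j + 1 := ⟨k - 1, (Nat.succ_pred_eq_of_pos hk).symm⟩
  have hbk : θ • b (j + 1) = μ • Aᵀ.mulVec f - P.mulVec (u (j + 1)) := by
    rw [part1 j, hP, smul_mulVec]
  have hTPmul : T * (P + θ • (1 : Matrix (Fin n) (Fin n) ℝ)) = 1 :=
    Matrix.nonsing_inv_mul _ hPθdet
  have hone : (T * P).mulVec (u (j + 1)) + θ • T.mulVec (u (j + 1)) = u (j + 1) := by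
    have h : (T * (P + θ • (1 : Matrix (Fin n) (Fin n) ℝ))).mulVec (u (j + 1)) = u (j + 1) := by
      rw [hTPmul, one_mulVec]
    rw [mul_add, Matrix.mul_smul, mul_one, add_mulVec, smul_mulVec] at h
    exact h
  rw [hu (j + 1), hw (j + 1), hbk, hQ]
  simp only [Matrix.mulVec_add, Matrix.mulVec_sub, Matrix.mulVec_smul, Matrix.add_mulVec,
    Matrix.sub_mulVec, Matrix.smul_mulVec, Matrix.one_mulVec, Matrix.mulVec_mulVec,
    mul_sub, sub_mul, mul_add, add_mul, Matrix.mul_smul, Matrix.smul_mul, mul_one, one_mul,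
    mul_assoc, smul_add, smul_sub, smul_smul]
  linear_combination (norm := module) hone
end

section
/- The matrix Q = θ(P+θI)⁻¹((R+θI)⁻¹(θI−P) − I) satisfies the identity I + 2Q = (P+θI)⁻¹(R+θI)⁻¹(θI−R)(θI−P). -/
open Matrix

lemma smul_posSemidef' {n : ℕ} {c : ℝ} (hc : 0 ≤ c) {M : Matrix (Fin n) (Fin n) ℝ}
    (hM : M.PosSemidef) : (c • M).PosSemidef := by
  refine posSemidef_iff_dotProduct_mulVec.mpr ⟨by rw [IsHermitian, conjTranspose_smul, star_trivial, hM.1.eq], fun x => ?_⟩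
  rw [smul_mulVec, dotProduct_smul, smul_eq_mul]
  exact mul_nonneg hc ((posSemidef_iff_dotProduct_mulVec.mp hM).2 x)

lemma smul_one_posDef' {n : ℕ} {c : ℝ} (hc : 0 < c) :
    (c • (1 : Matrix (Fin n) (Fin n) ℝ)).PosDef := by
  refine posDef_iff_dotProduct_mulVec.mpr ⟨by rw [IsHermitian, conjTranspose_smul, star_trivial, conjTranspose_one], fun x hx => ?_⟩
  rw [smul_mulVec, one_mulVec, dotProduct_smul, smul_eq_mul]
  exact mul_pos hc (by simpa using (dotProduct_star_self_pos_iff (v := x)).2 hx)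

/-- Q = θ(P+θI)⁻¹((R+θI)⁻¹(θI−P) − I) satisfies
I + 2Q = (P+θI)⁻¹(R+θI)⁻¹(θI−R)(θI−P). -/
theorem admm_I_add_two_Q_identity {m n : ℕ} (θ μ : ℝ) (hθ : 0 < θ) (hμ : 0 < μ)
    (A : Matrix (Fin m) (Fin n) ℝ) (L : Matrix (Fin n) (Fin n) ℝ)
    (P R : Matrix (Fin n) (Fin n) ℝ)
    (hP : P = μ • (Aᵀ * A)) (hR : R = Lᵀ * L) :
    (1 : Matrix (Fin n) (Fin n) ℝ) +
      (2 : ℝ) • (θ • ((P + θ • (1 : Matrix (Fin n) (Fin n) ℝ))⁻¹ *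
        ((R + θ • (1 : Matrix (Fin n) (Fin n) ℝ))⁻¹ *
          (θ • (1 : Matrix (Fin n) (Fin n) ℝ) - P) - 1))) =
      (P + θ • (1 : Matrix (Fin n) (Fin n) ℝ))⁻¹ *
        ((R + θ • (1 : Matrix (Fin n) (Fin n) ℝ))⁻¹ *
          ((θ • (1 : Matrix (Fin n) (Fin n) ℝ) - R) *
            (θ • (1 : Matrix (Fin n) (Fin n) ℝ) - P))) := by
  have hPsd : P.PosSemidef := by
    rw [hP]
    exact smul_posSemidef' hμ.le (by simpa using posSemidef_conjTranspose_mul_self A)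
  have hRsd : R.PosSemidef := by
    rw [hR]; simpa using posSemidef_conjTranspose_mul_self L
  have hS : (P + θ • (1 : Matrix (Fin n) (Fin n) ℝ)).PosDef :=
    Matrix.PosDef.posSemidef_add hPsd (smul_one_posDef' hθ)
  have hT : (R + θ • (1 : Matrix (Fin n) (Fin n) ℝ)).PosDef :=
    Matrix.PosDef.posSemidef_add hRsd (smul_one_posDef' hθ)
  letI := hS.isUnit.invertible
  letI := hT.isUnit.invertible
  set S := P + θ • (1 : Matrix (Fin n) (Fin n) ℝ) with hSdef
  set T := R + θ • (1 : Matrix (Fin n) (Fin n) ℝ) with hTdef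
  refine hS.isUnit.mul_right_injective ?_
  show S * _ = S * _
  simp only [mul_add, mul_sub, mul_smul_comm, mul_one,
    Matrix.mul_inv_cancel_left_of_invertible, Matrix.mul_inv_of_invertible]
  refine hT.isUnit.mul_right_injective ?_
  show T * _ = T * _
  simp only [mul_add, mul_sub, mul_smul_comm, mul_one,
    Matrix.mul_inv_cancel_left_of_invertible, Matrix.mul_inv_of_invertible]
  rw [hSdef, hTdef]
  simp only [mul_add, add_mul, mul_sub, sub_mul, mul_one, one_mul, smul_mul_assoc,
    mul_smul_comm, smul_smul, smul_sub, smul_add, Matrix.mul_one, Matrix.one_mul]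
  module
end

section
/- Let θ>0, μ>0, A a real m×n matrix and L a real n×n matrix, and define Q = θ(μAᵀA+θI)⁻¹((LᵀL+θI)⁻¹(θI−μAᵀA) − I). Then every real eigenvalue λ of Q satisfies −1 ≤ λ ≤ 0. -/
open Matrix

private lemma dot_self_nonneg' {k : ℕ} (v : Fin k → ℝ) : 0 ≤ v ⬝ᵥ v :=
  Finset.sum_nonneg fun _ _ => mul_self_nonneg _

private lemma psd_aux {k l : ℕ} (μ : ℝ) (hμ : 0 ≤ μ) (B : Matrix (Fin k) (Fin l) ℝ) :
    (μ • (Bᵀ * B)).PosSemidef := by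
  have h1 : (Bᵀ * B).PosSemidef := by
    simpa [conjTranspose_eq_transpose_of_trivial] using
      Matrix.posSemidef_conjTranspose_mul_self B
  constructor
  · simp [Matrix.IsHermitian, conjTranspose_smul, h1.1.eq]
  · intro x
    exact (h1.smul hμ).2 x

private lemma pd_aux {k l : ℕ} (θ μ : ℝ) (hθ : 0 < θ) (hμ : 0 ≤ μ)
    (B : Matrix (Fin k) (Fin l) ℝ) :
    (μ • (Bᵀ * B) + θ • (1 : Matrix (Fin l) (Fin l) ℝ)).PosDef := by
  have h2 : (θ • (1 : Matrix (Fin l) (Fin l) ℝ)).PosDef := by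
    rw [smul_one_eq_diagonal]
    exact .diagonal fun _ => hθ
  exact Matrix.PosDef.posSemidef_add (psd_aux μ hμ B) h2

/-- Let θ>0, μ>0, A a real m×n matrix and L a real n×n matrix, and define
Q = θ(μAᵀA+θI)⁻¹((LᵀL+θI)⁻¹(θI−μAᵀA) − I). Then every real eigenvalue λ of Q
satisfies −1 ≤ λ ≤ 0. -/
theorem admm_Q_real_eigenvalues_in_Icc {m n : ℕ} (θ μ : ℝ) (hθ : 0 < θ) (hμ : 0 < μ)
    (A : Matrix (Fin m) (Fin n) ℝ) (L : Matrix (Fin n) (Fin n) ℝ)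
    (Q : Matrix (Fin n) (Fin n) ℝ)
    (hQ : Q = θ • ((μ • (Aᵀ * A) + θ • (1 : Matrix (Fin n) (Fin n) ℝ))⁻¹ *
      ((Lᵀ * L + θ • (1 : Matrix (Fin n) (Fin n) ℝ))⁻¹ *
        (θ • (1 : Matrix (Fin n) (Fin n) ℝ) - μ • (Aᵀ * A)) - 1)))
    (lam : ℝ) (x : Fin n → ℝ) (hx : x ≠ 0) (hEig : Q.mulVec x = lam • x) :
    -1 ≤ lam ∧ lam ≤ 0 := by
  have hPd := pd_aux θ μ hθ hμ.le A
  have hNd : (Lᵀ * L + θ • (1 : Matrix (Fin n) (Fin n) ℝ)).PosDef := by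
    simpa using pd_aux θ 1 hθ zero_le_one L
  have hPinv : (μ • (Aᵀ * A) + θ • (1 : Matrix (Fin n) (Fin n) ℝ)) *
      (μ • (Aᵀ * A) + θ • (1 : Matrix (Fin n) (Fin n) ℝ))⁻¹ = 1 :=
    mul_nonsing_inv _ ((Matrix.isUnit_iff_isUnit_det _).mp hPd.isUnit)
  have hNinv : (Lᵀ * L + θ • (1 : Matrix (Fin n) (Fin n) ℝ)) *
      (Lᵀ * L + θ • (1 : Matrix (Fin n) (Fin n) ℝ))⁻¹ = 1 :=
    mul_nonsing_inv _ ((Matrix.isUnit_iff_isUnit_det _).mp hNd.isUnit)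
  -- key matrix identity : N * (P * Q) = (-θ) • (M + S)
  have hkey : (Lᵀ * L + θ • (1 : Matrix (Fin n) (Fin n) ℝ)) *
      ((μ • (Aᵀ * A) + θ • (1 : Matrix (Fin n) (Fin n) ℝ)) * Q)
      = (-θ) • (μ • (Aᵀ * A) + Lᵀ * L) := by
    rw [hQ, mul_smul_comm, ← mul_assoc (μ • (Aᵀ * A) + θ • (1 : Matrix (Fin n) (Fin n) ℝ)),
      hPinv, one_mul, mul_smul_comm, mul_sub,
      ← mul_assoc (Lᵀ * L + θ • (1 : Matrix (Fin n) (Fin n) ℝ)), hNinv, one_mul, mul_one]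
    module
  -- vector form of the identity applied to the eigenvector
  have h1 : lam • ((Lᵀ * L + θ • (1 : Matrix (Fin n) (Fin n) ℝ)) *ᵥ
        ((μ • (Aᵀ * A) + θ • (1 : Matrix (Fin n) (Fin n) ℝ)) *ᵥ x))
      = (-θ) • ((μ • (Aᵀ * A) + Lᵀ * L) *ᵥ x) := by
    have h := congrArg (fun B => B *ᵥ x) hkey
    simp only [← mulVec_mulVec] at h
    rw [hEig] at h
    simp only [mulVec_smul, smul_mulVec] at h
    exact h
  -- the crucial vector identity for z = lam • (μ A^T A x) + θ(1+lam) x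
  have hz : (Lᵀ * L) *ᵥ (lam • (μ • ((Aᵀ * A) *ᵥ x)) + (θ * (1 + lam)) • x)
      = (-(θ * (1 + lam))) • (μ • ((Aᵀ * A) *ᵥ x)) + (-(lam * (θ * θ))) • x := by
    funext i
    have hi := congrFun h1 i
    simp only [add_mulVec, mulVec_add, mulVec_smul, smul_mulVec, one_mulVec,
      Pi.add_apply, Pi.smul_apply, smul_eq_mul] at hi ⊢
    linear_combination hi
  -- nonnegativity of the quadratic form of S = LᵀL at z
  have hq : 0 ≤ (lam • (μ • ((Aᵀ * A) *ᵥ x)) + (θ * (1 + lam)) • x) ⬝ᵥ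
      ((Lᵀ * L) *ᵥ (lam • (μ • ((Aᵀ * A) *ᵥ x)) + (θ * (1 + lam)) • x)) := by
    rw [← mulVec_mulVec _ Lᵀ L, dotProduct_mulVec, vecMul_transpose]
    exact dot_self_nonneg' _
  rw [hz] at hq
  -- scalar quantities
  have hcomm : ((Aᵀ * A) *ᵥ x) ⬝ᵥ x = x ⬝ᵥ ((Aᵀ * A) *ᵥ x) := dotProduct_comm _ _
  have ha : 0 ≤ x ⬝ᵥ ((Aᵀ * A) *ᵥ x) := by
    rw [← mulVec_mulVec _ Aᵀ A, dotProduct_mulVec, vecMul_transpose]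
    exact dot_self_nonneg' _
  have hpp : 0 ≤ ((Aᵀ * A) *ᵥ x) ⬝ᵥ ((Aᵀ * A) *ᵥ x) := dot_self_nonneg' _
  have hxx : 0 < x ⬝ᵥ x :=
    (dot_self_nonneg' x).lt_of_ne fun h => hx (dotProduct_self_eq_zero.mp h.symm)
  -- rewrite hq as an explicit polynomial inequality
  have key : 0 ≤ -(lam * (1 + lam)) * (θ * (μ * (μ * (((Aᵀ * A) *ᵥ x) ⬝ᵥ ((Aᵀ * A) *ᵥ x)))))
      - (θ * θ) * ((1 + lam) ^ 2 + lam ^ 2) * (μ * (x ⬝ᵥ ((Aᵀ * A) *ᵥ x)))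
      - lam * (1 + lam) * (θ * θ * θ) * (x ⬝ᵥ x) := by
    have e : (lam • (μ • ((Aᵀ * A) *ᵥ x)) + (θ * (1 + lam)) • x) ⬝ᵥ
        ((-(θ * (1 + lam))) • (μ • ((Aᵀ * A) *ᵥ x)) + (-(lam * (θ * θ))) • x)
        = -(lam * (1 + lam)) * (θ * (μ * (μ * (((Aᵀ * A) *ᵥ x) ⬝ᵥ ((Aᵀ * A) *ᵥ x)))))
          - (θ * θ) * ((1 + lam) ^ 2 + lam ^ 2) * (μ * (x ⬝ᵥ ((Aᵀ * A) *ᵥ x)))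
          - lam * (1 + lam) * (θ * θ * θ) * (x ⬝ᵥ x) := by
      simp only [dotProduct_add, add_dotProduct, smul_dotProduct, dotProduct_smul, smul_eq_mul]
      linear_combination (-(lam ^ 2 * (θ * θ) * μ)) * hcomm
    linarith [e ▸ hq]
  have main : lam * (1 + lam) ≤ 0 := by
    by_contra hcon
    push_neg at hcon
    have t1 : 0 ≤ (θ * θ) * ((1 + lam) ^ 2 + lam ^ 2) * (μ * (x ⬝ᵥ ((Aᵀ * A) *ᵥ x))) :=
      mul_nonneg (mul_nonneg (mul_self_nonneg θ) (by positivity)) (mul_nonneg hμ.le ha)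
    have t2 : 0 ≤ lam * (1 + lam) *
        (θ * (μ * (μ * (((Aᵀ * A) *ᵥ x) ⬝ᵥ ((Aᵀ * A) *ᵥ x))))) :=
      mul_nonneg hcon.le (mul_nonneg hθ.le (mul_nonneg hμ.le (mul_nonneg hμ.le hpp)))
    have t3 : 0 < lam * (1 + lam) * (θ * θ * θ) * (x ⬝ᵥ x) :=
      mul_pos (mul_pos hcon (by positivity)) hxx
    nlinarith [key]
  constructor <;> nlinarith [main]
end

section
/- (Theorem 2) Let λ₁, λₙ be real numbers with −1 ≤ λ₁ ≤ λₙ ≤ 0 and λ₁ < 0, and set α* = −2/(λ₁+λₙ). Then for every real α, max(1+αλₙ, −1−αλ₁) ≥ (λ₁−λₙ)/(λ₁+λₙ), with equality when α = α*; that is, α* minimizes the spectral radius ρ(I+αQ) = max(1+αλₙ, −1−αλ₁) of the over-relaxed ADMM iteration matrix, and the minimum value is (λ₁−λₙ)/(λ₁+λₙ). -/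
/-- (Theorem 2) Let λ₁, λₙ be real numbers with −1 ≤ λ₁ ≤ λₙ ≤ 0 and λ₁ < 0, and set
α* = −2/(λ₁+λₙ). Then for every real α, max(1+αλₙ, −1−αλ₁) ≥ (λ₁−λₙ)/(λ₁+λₙ), with
equality when α = α*. -/
theorem optimal_relaxation_parameter (lam1 lamn αstar : ℝ)
    (h1 : -1 ≤ lam1) (h12 : lam1 ≤ lamn) (h2 : lamn ≤ 0) (hneg : lam1 < 0)
    (hαstar : αstar = -2 / (lam1 + lamn)) :
    (∀ α : ℝ, (lam1 - lamn) / (lam1 + lamn) ≤ max (1 + α * lamn) (-1 - α * lam1)) ∧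
    max (1 + αstar * lamn) (-1 - αstar * lam1) = (lam1 - lamn) / (lam1 + lamn) := by
  have hs : lam1 + lamn < 0 := by linarith
  have hs' : lam1 + lamn ≠ 0 := ne_of_lt hs
  constructor
  · intro α
    rw [div_le_iff_of_neg hs]
    rcases le_total (1 + α * lamn) (-1 - α * lam1) with h | h
    · rw [max_eq_right h]; nlinarith [mul_nonneg (neg_nonneg.2 h2) (sub_nonneg.2 h12)]
    · rw [max_eq_left h]; nlinarith [mul_nonneg (neg_nonneg.2 hneg.le) (sub_nonneg.2 h12)]
  · have e1 : 1 + αstar * lamn = (lam1 - lamn) / (lam1 + lamn) := by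
      rw [hαstar]; field_simp; ring
    have e2 : -1 - αstar * lam1 = (lam1 - lamn) / (lam1 + lamn) := by
      rw [hαstar]; field_simp; ring
    rw [e1, e2, max_self]
end

section
/- Let λ₁, λₙ be real numbers with −1 ≤ λ₁ ≤ λₙ ≤ 0 and λ₁ < 0. Then (λ₁−λₙ)/(λ₁+λₙ) ≤ max(1+λₙ, −1−λ₁); that is, the spectral radius of I+α*Q with the optimal relaxation parameter α* = −2/(λ₁+λₙ) is no larger than the spectral radius of I+Q (the unrelaxed case α = 1). -/
/-- Let λ₁, λₙ be real numbers with −1 ≤ λ₁ ≤ λₙ ≤ 0 and λ₁ < 0. Then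
(λ₁−λₙ)/(λ₁+λₙ) ≤ max(1+λₙ, −1−λ₁): the optimally relaxed spectral radius is no larger
than the unrelaxed one. -/
theorem relaxed_radius_le_unrelaxed (lam1 lamn : ℝ)
    (h1 : -1 ≤ lam1) (h12 : lam1 ≤ lamn) (h2 : lamn ≤ 0) (hneg : lam1 < 0) :
    (lam1 - lamn) / (lam1 + lamn) ≤ max (1 + lamn) (-1 - lam1) := by
  have hs : lam1 + lamn < 0 := by linarith
  refine le_trans ?_ (le_max_left _ _)
  rw [div_le_iff_of_neg hs]
  nlinarith [mul_nonneg (neg_nonneg.2 h2) (by linarith : (0:ℝ) ≤ 2 + lam1 + lamn)]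
end

section
/- (Theorem 3, ADMM part) Let μ > 0 and define f : (0,∞) → ℝ by f(θ) = −θ(1+μ)/(θ² + μ + θ(1+μ)) for θ < 1 and f(θ) = −1/(θ+1) for θ ≥ 1. If μ ≤ 1, then for all θ > 0, f(θ) ≥ −(1+μ)/(2√μ + 1 + μ), with equality at θ = √μ. If μ > 1, then for all θ > 0, f(θ) ≥ −1/2, with equality at θ = 1. -/
/-- (Theorem 3, ADMM part) Let μ > 0 and define f on (0,∞) by
f(θ) = −θ(1+μ)/(θ² + μ + θ(1+μ)) for θ < 1 and f(θ) = −1/(θ+1) for θ ≥ 1.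
If μ ≤ 1, then for all θ > 0, f(θ) ≥ −(1+μ)/(2√μ + 1 + μ), with equality at θ = √μ.
If μ > 1, then for all θ > 0, f(θ) ≥ −1/2, with equality at θ = 1. -/
theorem admm_deblurring_optimal_theta (μ : ℝ) (hμ : 0 < μ) (f : ℝ → ℝ)
    (hf : ∀ θ : ℝ, 0 < θ →
      f θ = if θ < 1 then -(θ * (1 + μ)) / (θ ^ 2 + μ + θ * (1 + μ))
            else -1 / (θ + 1)) :
    (μ ≤ 1 →
      (∀ θ : ℝ, 0 < θ → -(1 + μ) / (2 * Real.sqrt μ + 1 + μ) ≤ f θ) ∧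
      f (Real.sqrt μ) = -(1 + μ) / (2 * Real.sqrt μ + 1 + μ)) ∧
    (1 < μ →
      (∀ θ : ℝ, 0 < θ → -(1 / 2) ≤ f θ) ∧ f 1 = -(1 / 2)) := by
  have hs : Real.sqrt μ ^ 2 = μ := Real.sq_sqrt hμ.le
  have hs0 : 0 < Real.sqrt μ := Real.sqrt_pos.mpr hμ
  constructor
  · intro hμ1
    have hs1 : Real.sqrt μ ≤ 1 := by nlinarith
    have hd2 : 0 < 2 * Real.sqrt μ + 1 + μ := by positivity
    constructor
    · intro θ hθ
      rw [hf θ hθ]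
      split_ifs with h
      · have hd : 0 < θ ^ 2 + μ + θ * (1 + μ) := by positivity
        rw [div_le_div_iff₀ hd2 hd]
        nlinarith [sq_nonneg (θ - Real.sqrt μ), hμ.le, hμ1]
      · have hθ1 : 1 ≤ θ := le_of_not_gt h
        have hd : 0 < θ + 1 := by linarith
        rw [div_le_div_iff₀ hd2 hd]
        nlinarith [sq_nonneg (Real.sqrt μ - 1)]
    · rw [hf _ hs0]
      split_ifs with h
      · have hd : 0 < Real.sqrt μ ^ 2 + μ + Real.sqrt μ * (1 + μ) := by positivity
        rw [div_eq_div_iff hd.ne' hd2.ne']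
        nlinarith [hs, hs0]
      · have h1 : Real.sqrt μ = 1 := le_antisymm hs1 (le_of_not_gt h)
        have hμ1' : μ = 1 := by nlinarith
        rw [h1, hμ1']
        norm_num
  · intro hμ1
    constructor
    · intro θ hθ
      rw [hf θ hθ]
      split_ifs with h
      · have hd : 0 < θ ^ 2 + μ + θ * (1 + μ) := by positivity
        rw [le_div_iff₀ hd]
        nlinarith [mul_pos (by linarith : (0:ℝ) < 1 - θ) (by linarith : (0:ℝ) < μ - θ)]
      · have hθ1 : 1 ≤ θ := le_of_not_gt h
        have hd : 0 < θ + 1 := by linarith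
        rw [le_div_iff₀ hd]
        linarith
    · rw [hf 1 one_pos]
      norm_num
end

section
/- (Theorem 3, over-relaxed part) Let μ > 0 and for θ > 0 set v₁(θ) = −θ(1+μ)/(θ² + μ + θ(1+μ)) and v₂(θ) = −1/(θ+1), and let m(θ) = min(v₁(θ), v₂(θ)) and M(θ) = max(v₁(θ), v₂(θ)). Then for every θ > 0, (m(θ) − M(θ))/(m(θ) + M(θ)) = |θ−1|·μ/(2θ + μ + θμ); consequently this quantity is minimized over θ > 0 exactly at θ* = 1 with minimum value 0, and the corresponding optimal relaxation parameter is α* = −2/(v₁(1) + v₂(1)) = 2. -/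
/-- (Theorem 3, over-relaxed part) Let μ > 0 and for θ > 0 set
v₁(θ) = −θ(1+μ)/(θ² + μ + θ(1+μ)) and v₂(θ) = −1/(θ+1), with m(θ) = min(v₁(θ), v₂(θ))
and M(θ) = max(v₁(θ), v₂(θ)). Then for every θ > 0,
(m(θ) − M(θ))/(m(θ) + M(θ)) = |θ−1|·μ/(2θ + μ + θμ); consequently this quantity is
minimized over θ > 0 exactly at θ* = 1 with minimum value 0, and the corresponding
optimal relaxation parameter is α* = −2/(v₁(1) + v₂(1)) = 2. -/
theorem overrelaxed_deblurring_optimal_parameters (μ : ℝ) (hμ : 0 < μ)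
    (v₁ v₂ m M : ℝ → ℝ)
    (hv₁ : ∀ θ : ℝ, 0 < θ → v₁ θ = -(θ * (1 + μ)) / (θ ^ 2 + μ + θ * (1 + μ)))
    (hv₂ : ∀ θ : ℝ, 0 < θ → v₂ θ = -1 / (θ + 1))
    (hm : ∀ θ : ℝ, 0 < θ → m θ = min (v₁ θ) (v₂ θ))
    (hM : ∀ θ : ℝ, 0 < θ → M θ = max (v₁ θ) (v₂ θ)) :
    (∀ θ : ℝ, 0 < θ →
      (m θ - M θ) / (m θ + M θ) = |θ - 1| * μ / (2 * θ + μ + θ * μ)) ∧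
    (∀ θ : ℝ, 0 < θ → (m 1 - M 1) / (m 1 + M 1) ≤ (m θ - M θ) / (m θ + M θ)) ∧
    (∀ θ : ℝ, 0 < θ →
      (m θ - M θ) / (m θ + M θ) = (m 1 - M 1) / (m 1 + M 1) → θ = 1) ∧
    (m 1 - M 1) / (m 1 + M 1) = 0 ∧
    -2 / (v₁ 1 + v₂ 1) = 2 := by
  have key : ∀ θ : ℝ, 0 < θ →
      (m θ - M θ) / (m θ + M θ) = |θ - 1| * μ / (2 * θ + μ + θ * μ) := by
    intro θ hθ
    have h1 : (0:ℝ) < θ + 1 := by linarith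
    have h2 : (0:ℝ) < θ + μ := by linarith
    have hP : (0:ℝ) < (θ + 1) * (θ + μ) := mul_pos h1 h2
    have h3 : (0:ℝ) < 2 * θ + μ + θ * μ := by nlinarith
    rw [hm θ hθ, hM θ hθ, hv₁ θ hθ, hv₂ θ hθ]
    set A : ℝ := -(θ * (1 + μ)) / (θ ^ 2 + μ + θ * (1 + μ)) with hA
    set B : ℝ := -1 / (θ + 1) with hB
    have hDen : θ ^ 2 + μ + θ * (1 + μ) = (θ + 1) * (θ + μ) := by ring
    have hdiff : A - B = μ * (1 - θ) / ((θ + 1) * (θ + μ)) := by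
      rw [hA, hB, hDen]
      field_simp
      ring
    have hsum : A + B = -((2 * θ + μ + θ * μ) / ((θ + 1) * (θ + μ))) := by
      rw [hA, hB, hDen]
      field_simp
      ring
    have hmm : min A B - max A B = -|A - B| := by
      rcases le_total A B with h | h
      · rw [min_eq_left h, max_eq_right h, abs_sub_comm, abs_of_nonneg (by linarith)]
        ring
      · rw [min_eq_right h, max_eq_left h, abs_of_nonneg (by linarith)]
        ring
    rw [hmm, min_add_max, hdiff, hsum]
    have habs : |μ * (1 - θ) / ((θ + 1) * (θ + μ))| =
        μ * |θ - 1| / ((θ + 1) * (θ + μ)) := by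
      rw [abs_div, abs_of_pos hP, abs_mul, abs_of_pos hμ, abs_sub_comm]
    rw [habs, div_neg_eq_neg_div, neg_div, neg_neg,
      div_div_div_cancel_right₀ hP.ne']
    ring
  refine ⟨key, ?_, ?_, ?_, ?_⟩
  · intro θ hθ
    rw [key 1 one_pos, key θ hθ]
    have h3 : (0:ℝ) < 2 * θ + μ + θ * μ := by nlinarith
    simp only [sub_self, abs_zero, zero_mul, zero_div]
    positivity
  · intro θ hθ h
    rw [key 1 one_pos, key θ hθ] at h
    simp only [sub_self, abs_zero, zero_mul, zero_div] at h
    have h3 : (0:ℝ) < 2 * θ + μ + θ * μ := by nlinarith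
    have := div_eq_zero_iff.mp h
    rcases this with h' | h'
    · rcases mul_eq_zero.mp h' with h'' | h''
      · have := abs_eq_zero.mp h''; linarith
      · linarith
    · linarith
  · rw [key 1 one_pos]; simp
  · have h : v₁ 1 + v₂ 1 = -1 := by
      rw [hv₁ 1 one_pos, hv₂ 1 one_pos,
        show (1:ℝ) ^ 2 + μ + 1 * (1 + μ) = 2 * (1 + μ) by ring]
      have : (1:ℝ) + μ ≠ 0 := by positivity
      field_simp
      ring
    rw [h]; norm_num
end

section
/- Let μ > 0 and θ > 0, and define h : (0,∞) → ℝ by h(g) = −θ(g+μ)/(θ² + (μ+θ)g + θμ). If θ < μ then h is strictly increasing on (0,∞); if θ > μ then h is strictly decreasing on (0,∞); and if θ = μ then h is constantly equal to −1/2. -/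
/-- Let μ > 0 and θ > 0, and define h on (0,∞) by
h(g) = −θ(g+μ)/(θ² + (μ+θ)g + θμ). If θ < μ then h is strictly increasing on (0,∞);
if θ > μ then h is strictly decreasing on (0,∞); and if θ = μ then h is constantly
equal to −1/2. -/
theorem mri_eigenvalue_monotonicity (μ θ : ℝ) (hμ : 0 < μ) (hθ : 0 < θ)
    (h : ℝ → ℝ)
    (hh : ∀ g : ℝ, 0 < g →
      h g = -(θ * (g + μ)) / (θ ^ 2 + (μ + θ) * g + θ * μ)) :
    (θ < μ → StrictMonoOn h (Set.Ioi (0 : ℝ))) ∧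
    (μ < θ → StrictAntiOn h (Set.Ioi (0 : ℝ))) ∧
    (θ = μ → ∀ g : ℝ, 0 < g → h g = -(1 / 2)) := by
  have hD : ∀ g : ℝ, 0 < g → 0 < θ ^ 2 + (μ + θ) * g + θ * μ := by
    intro g hg; nlinarith
  refine ⟨?_, ?_, ?_⟩
  · intro hlt a ha b hb hab
    simp only [Set.mem_Ioi] at ha hb
    rw [hh a ha, hh b hb, div_lt_div_iff₀ (hD a ha) (hD b hb)]
    nlinarith [mul_pos (sub_pos.mpr hab) (sub_pos.mpr hlt), mul_pos hθ (mul_pos (sub_pos.mpr hab) (sub_pos.mpr hlt))]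
  · intro hlt a ha b hb hab
    simp only [Set.mem_Ioi] at ha hb
    rw [hh a ha, hh b hb, div_lt_div_iff₀ (hD b hb) (hD a ha)]
    nlinarith [mul_pos hθ (mul_pos (sub_pos.mpr hab) (sub_pos.mpr hlt))]
  · intro heq g hg
    rw [hh g hg, heq]
    have : 0 < μ ^ 2 + (μ + μ) * g + μ * μ := by nlinarith
    field_simp
    ring
end
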